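/- Let q ≥ 3 be a prime and let n be a positive integer coprime to q with Ω(n) ≥ q − 2 (number of prime factors with multiplicity) such that no divisor d > 1 of n is congruent to 1 mod q. Then Ω(n) = q − 2 and all prime factors of n are congruent to a single primitive root a modulo q. -/

import Mathlib

private lemma seg_lemma {q : ℕ} [Fact (Nat.Prime q)] (L : List ℕ)
    (hu : ∀ x ∈ L, (x : ZMod q) ≠ 0)
    (hs : ∀ t : List ℕ, t ≠ [] → t.Sublist L → ((t.prod : ℕ) : ZMod q) ≠ 1) :
    (∀ i, (((L.take i).prod : ℕ) : ZMod q) ≠ 0) ∧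
    Set.InjOn (fun i => (((L.take i).prod : ℕ) : ZMod q)) (Set.Iic L.length) := by
  have hne : ∀ t : List ℕ, t.Sublist L → ((t.prod : ℕ) : ZMod q) ≠ 0 := by
    intro t ht
    rw [Nat.cast_list_prod]
    apply List.prod_ne_zero
    intro h0
    rcases List.mem_map.mp h0 with ⟨x, hx, hx0⟩
    exact hu x (ht.mem hx) hx0
  refine ⟨fun i => hne _ (List.take_sublist _ _), ?_⟩
  have key : ∀ i j, i < j → j ≤ L.length →
      (((L.take i).prod : ℕ) : ZMod q) ≠ (((L.take j).prod : ℕ) : ZMod q) := by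
    intro i j hij hj heq
    set t := (L.take j).drop i with ht
    have hsplit : L.take j = L.take i ++ t := by
      conv_lhs => rw [← List.take_append_drop i (L.take j)]
      rw [List.take_take, min_eq_left hij.le]
    have htlen : t.length = j - i := by
      simp [ht, List.length_drop, List.length_take, min_eq_left hj]
    have htne : t ≠ [] := by
      apply List.ne_nil_of_length_pos
      omega
    have htsub : t.Sublist L := (List.drop_sublist _ _).trans (List.take_sublist _ _)
    have hprod : (L.take j).prod = (L.take i).prod * t.prod := by
      rw [hsplit, List.prod_append]
    rw [hprod, Nat.cast_mul] at heq
    have h1 : ((t.prod : ℕ) : ZMod q) = 1 := by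
      have h0 := hne (L.take i) (List.take_sublist _ _)
      have h2 : (((L.take i).prod : ℕ) : ZMod q) * 1
          = (((L.take i).prod : ℕ) : ZMod q) * ((t.prod : ℕ) : ZMod q) := by
        rw [mul_one]; exact heq
      exact (mul_left_cancel₀ h0 h2).symm
    exact hs t htne htsub h1
  intro i hi j hj h
  rcases lt_trichotomy i j with h' | h' | h'
  · exact absurd h (key i j h' hj)
  · exact h'
  · exact absurd h.symm (key j i h' hi)
private lemma card_lemma {q : ℕ} [Fact (Nat.Prime q)] (L : List ℕ)
    (hu : ∀ x ∈ L, (x : ZMod q) ≠ 0)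
    (hs : ∀ t : List ℕ, t ≠ [] → t.Sublist L → ((t.prod : ℕ) : ZMod q) ≠ 1) :
    L.length + 1 ≤ q - 1 ∧
    (L.length = q - 2 → 3 ≤ q →
      (Finset.range (L.length + 1)).image
        (fun i => (((L.take i).prod : ℕ) : ZMod q)) = Finset.univ.erase 0) := by
  obtain ⟨hnz, hinj⟩ := seg_lemma L hu hs
  have hinj' : Set.InjOn (fun i => (((L.take i).prod : ℕ) : ZMod q))
      ↑(Finset.range (L.length + 1)) := by
    intro a ha b hb hab
    simp only [Finset.coe_range, Set.mem_Iio] at ha hb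
    exact hinj (by simp; omega) (by simp; omega) hab
  have hsubset : (Finset.range (L.length + 1)).image
      (fun i => (((L.take i).prod : ℕ) : ZMod q)) ⊆ Finset.univ.erase 0 := by
    intro x hx
    rcases Finset.mem_image.mp hx with ⟨i, _, rfl⟩
    exact Finset.mem_erase.mpr ⟨hnz i, Finset.mem_univ _⟩
  have hcardimg : ((Finset.range (L.length + 1)).image
      (fun i => (((L.take i).prod : ℕ) : ZMod q))).card = L.length + 1 := by
    rw [Finset.card_image_of_injOn hinj', Finset.card_range]
  have hcarderase : (Finset.univ.erase (0 : ZMod q)).card = q - 1 := by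
    rw [Finset.card_erase_of_mem (Finset.mem_univ _), Finset.card_univ, ZMod.card]
  have hle := Finset.card_le_card hsubset
  rw [hcardimg, hcarderase] at hle
  refine ⟨hle, fun hlen hq3 => ?_⟩
  apply Finset.eq_of_subset_of_card_le hsubset
  rw [hcardimg, hcarderase]
  omega
/-- If gcd(n,q) = 1, Ω(n) ≥ q − 2, and no divisor d > 1 of n is ≡ 1 (mod q),
then Ω(n) = q − 2 and all prime factors of n are congruent to a single
primitive root a modulo q. -/
theorem stmt_16 (q : ℕ) (hq : q.Prime) (hq3 : 3 ≤ q)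
    (n : ℕ) (hn : 0 < n) (hcop : Nat.Coprime n q)
    (hbig : q - 2 ≤ n.primeFactorsList.length)
    (havoid : ∀ d : ℕ, d ∣ n → 1 < d → d % q ≠ 1) :
    n.primeFactorsList.length = q - 2 ∧
      ∃ a : ZMod q, orderOf a = q - 1 ∧ ∀ p ∈ n.primeFactors, (p : ZMod q) = a := by
  haveI : Fact q.Prime := ⟨hq⟩
  set l := n.primeFactorsList with hl
  have hforall : ∀ L : List ℕ, L.Perm l →
      (∀ x ∈ L, (x : ZMod q) ≠ 0) ∧
      (∀ t : List ℕ, t ≠ [] → t.Sublist L → ((t.prod : ℕ) : ZMod q) ≠ 1) := by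
    intro L hL
    constructor
    · intro x hx h0
      have hxl : x ∈ l := hL.mem_iff.mp hx
      have hdvd : x ∣ n := Nat.dvd_of_mem_primeFactorsList hxl
      have hqx : q ∣ x := (ZMod.natCast_eq_zero_iff x q).mp h0
      have h1 : q ∣ Nat.gcd n q := Nat.dvd_gcd (hqx.trans hdvd) dvd_rfl
      rw [hcop] at h1
      have := Nat.le_of_dvd one_pos h1
      omega
    · intro t ht hsub hcast
      have hmle : (↑t : Multiset ℕ) ≤ (↑l : Multiset ℕ) :=
        Multiset.coe_le.mpr (hsub.subperm.trans hL.subperm)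
      have hdvd : t.prod ∣ n := by
        have h2 := Multiset.prod_dvd_prod_of_le hmle
        simpa [hl, Nat.prod_primeFactorsList hn.ne'] using h2
      obtain ⟨x, hx⟩ := List.exists_mem_of_ne_nil t ht
      have hpr : ∀ y ∈ t, y.Prime := fun y hy =>
        Nat.prime_of_mem_primeFactorsList (hL.mem_iff.mp (hsub.mem hy))
      have hpos : 0 < t.prod := List.prod_pos (fun y hy => (hpr y hy).pos)
      have h2 : 1 < t.prod :=
        lt_of_lt_of_le (hpr x hx).one_lt (Nat.le_of_dvd hpos (List.dvd_prod hx))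
      apply havoid t.prod hdvd h2
      have hmod := (ZMod.natCast_eq_natCast_iff t.prod 1 q).mp
        (by rw [hcast, Nat.cast_one])
      have hmod' : t.prod % q = 1 % q := hmod
      rwa [Nat.mod_eq_of_lt (show 1 < q by omega)] at hmod'
  obtain ⟨hu0, hs0⟩ := hforall l (List.Perm.refl _)
  have hlen : l.length = q - 2 := by
    have := (card_lemma l hu0 hs0).1
    omega
  -- pairwise equality of prime factors mod q
  have hpair : ∀ p p', p ∈ l → p' ∈ l → ((p : ℕ) : ZMod q) = ((p' : ℕ) : ZMod q) := by
    intro p p' hp hp'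
    by_cases hpp : p = p'
    · rw [hpp]
    · have hp'e : p' ∈ (↑l : Multiset ℕ).erase p :=
        (Multiset.mem_erase_of_ne (Ne.symm hpp)).mpr (by exact_mod_cast hp')
      set r := (((↑l : Multiset ℕ).erase p).erase p') with hr
      have h2 : (↑l : Multiset ℕ) = p ::ₘ p' ::ₘ r := by
        rw [hr, Multiset.cons_erase hp'e,
          Multiset.cons_erase (show p ∈ (↑l : Multiset ℕ) by exact_mod_cast hp)]
      set rl := r.toList with hrl
      have hperm1 : (p :: p' :: rl).Perm l := by
        rw [← Multiset.coe_eq_coe]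
        simp only [Multiset.coe_toList, ← Multiset.cons_coe, hrl, Multiset.coe_toList]
        rw [h2]
      have hperm2 : (p' :: p :: rl).Perm l := by
        rw [← Multiset.coe_eq_coe]
        simp only [Multiset.coe_toList, ← Multiset.cons_coe, hrl, Multiset.coe_toList]
        rw [h2, Multiset.cons_swap]
      obtain ⟨hu1, hs1⟩ := hforall (p :: p' :: rl) hperm1
      obtain ⟨hu2, hs2⟩ := hforall (p' :: p :: rl) hperm2
      have hlen1 : (p :: p' :: rl).length = q - 2 := by rw [hperm1.length_eq, hlen]
      have hlen2 : (p' :: p :: rl).length = q - 2 := by rw [hperm2.length_eq, hlen]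
      have himg := (card_lemma _ hu1 hs1).2 hlen1 hq3
      have hmem : ((p' : ℕ) : ZMod q) ∈ Finset.univ.erase (0 : ZMod q) :=
        Finset.mem_erase.mpr ⟨hu2 p' (by simp), Finset.mem_univ _⟩
      rw [← himg] at hmem
      obtain ⟨i, hi, hif⟩ := Finset.mem_image.mp hmem
      by_cases hi1 : i = 1
      · subst hi1
        simpa using hif
      · exfalso
        have hswap : ((p :: p' :: rl).take i).prod = ((p' :: p :: rl).take i).prod := by
          match i, hi1 with
          | 0, _ => rfl
          | (k+2), _ =>
            simp only [List.take_succ_cons, List.prod_cons]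
            ring
        have hinj2 := (seg_lemma _ hu2 hs2).2
        have hi' : i ∈ Set.Iic (p' :: p :: rl).length := by
          rw [Finset.mem_range] at hi
          rw [hlen1] at hi
          rw [hlen2]; exact Set.mem_Iic.mpr (by omega)
        have h1' : 1 ∈ Set.Iic (p' :: p :: rl).length := by
          rw [hlen2]; exact Set.mem_Iic.mpr (by omega)
        have : i = 1 := by
          apply hinj2 hi' h1'
          show (((( p' :: p :: rl).take i).prod : ℕ) : ZMod q) = _
          rw [← hswap, hif]
          simp
        exact hi1 this
  -- the head prime
  have hlne : l ≠ [] := by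
    intro h
    rw [h] at hlen
    simp at hlen
    omega
  refine ⟨hlen, ((l.head hlne : ℕ) : ZMod q), ?_, ?_⟩
  · -- orderOf
    set a := ((l.head hlne : ℕ) : ZMod q) with ha
    have ha0 : a ≠ 0 := hu0 _ (List.head_mem hlne)
    have hpow : a ^ (q - 1) = 1 := ZMod.pow_card_sub_one_eq_one ha0
    have hdvd : orderOf a ∣ q - 1 := orderOf_dvd_of_pow_eq_one hpow
    have hne0 : orderOf a ≠ 0 := by
      intro h
      rw [h] at hdvd
      have := Nat.eq_zero_of_zero_dvd hdvd
      omega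
    by_contra hord
    have hdlt : orderOf a < q - 1 :=
      lt_of_le_of_ne (Nat.le_of_dvd (by omega) hdvd) hord
    set d := orderOf a with hd
    have hfd : (((l.take d).prod : ℕ) : ZMod q) = a ^ d := by
      rw [Nat.cast_list_prod]
      rw [List.prod_eq_pow_card _ a (fun x hx => by
        rcases List.mem_map.mp hx with ⟨y, hy, rfl⟩
        exact hpair y (l.head hlne) ((List.take_sublist _ _).mem hy) (List.head_mem hlne))]
      rw [List.length_map, List.length_take, min_eq_left (by omega)]
    have heq0 : (((l.take d).prod : ℕ) : ZMod q) = (((l.take 0).prod : ℕ) : ZMod q) := by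
      rw [hfd, hd, pow_orderOf_eq_one]
      simp
    have hinj := (seg_lemma l hu0 hs0).2
    have : d = 0 := hinj (Set.mem_Iic.mpr (by omega)) (Set.mem_Iic.mpr (by omega)) heq0
    exact hne0 this
  · intro p hp
    have hp' : p ∈ l := by
      exact Nat.mem_primeFactors_iff_mem_primeFactorsList.mp hp
    exact hpair p (l.head hlne) hp' (List.head_mem hlne)
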